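/- arXiv:2504.17176 — 5 statements merged into one kernel-verified Lean document; each statement's English description precedes it below -/
import Mathlib

section
/- The matrix I − e^{2ΔS} is invertible, and for every bounded measurable function g : [0,Δ] → ℝ one has ∫_{w=0}^{Δ} a (e^{S(Δ−w)} + e^{S(Δ+w)}) (I − e^{2ΔS})^{−1} s · g(w) dw = ∫_{x=0}^{∞} a e^{Sx} s · g(|x mod 2Δ − Δ|) dx, where both integrals converge absolutely. -/
open MeasureTheory Matrix

section contAux
attribute [local instance] Matrix.linftyOpNormedRing Matrix.linftyOpNormedAlgebra

lemma exp_smul_cont {p : ℕ} (S : Matrix (Fin p) (Fin p) ℝ) :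
    Continuous fun x : ℝ => NormedSpace.exp (x • S) :=
  NormedSpace.exp_continuous.comp (continuous_id.smul continuous_const)
end contAux

attribute [local instance] Matrix.normedAddCommGroup Matrix.normedSpace

/-- `e^{xS}` : the matrix exponential of `x • S`. -/
noncomputable def mexp {p : ℕ} (S : Matrix (Fin p) (Fin p) ℝ) (x : ℝ) :
    Matrix (Fin p) (Fin p) ℝ := NormedSpace.exp (x • S)

/-- The representative of `x` modulo `2Δ` lying in `[0, 2Δ)`. -/
noncomputable def rmod (Δ x : ℝ) : ℝ := 2 * Δ * Int.fract (x / (2 * Δ))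

lemma mexp_cont {p : ℕ} (S : Matrix (Fin p) (Fin p) ℝ) : Continuous (mexp S) :=
  exp_smul_cont S

lemma mexp_zero {p : ℕ} (S : Matrix (Fin p) (Fin p) ℝ) : mexp S 0 = 1 := by
  simp [mexp, NormedSpace.exp_zero]

lemma mexp_add {p : ℕ} (S : Matrix (Fin p) (Fin p) ℝ) (x y : ℝ) :
    mexp S (x + y) = mexp S x * mexp S y := by
  rw [mexp, add_smul]
  exact Matrix.exp_add_of_commute _ _ (by
    simpa using (Commute.refl S).smul_left (x) |>.smul_right y)

lemma mexp_pow {p : ℕ} (S : Matrix (Fin p) (Fin p) ℝ) (t : ℝ) (n : ℕ) :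
    mexp S t ^ n = mexp S (n * t) := by
  induction n with
  | zero => simp [mexp_zero]
  | succ n ih =>
    rw [pow_succ, ih, ← mexp_add]
    push_cast; ring_nf

set_option maxHeartbeats 1600000 in
/-- `I - e^{2ΔS}` is invertible and the folded-kernel identity
`∫₀^Δ a (e^{S(Δ-w)} + e^{S(Δ+w)}) (I - e^{2ΔS})⁻¹ s · g(w) dw
  = ∫₀^∞ a e^{Sx} s · g(|x mod 2Δ - Δ|) dx` holds, both integrals converging
absolutely. -/
theorem folded_kernel_identity
    (p : ℕ) (hp : 1 ≤ p) (S : Matrix (Fin p) (Fin p) ℝ)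
    (hS0 : Filter.Tendsto (fun x : ℝ => mexp S x) Filter.atTop (nhds 0))
    (hSint : IntegrableOn (fun x : ℝ => ‖mexp S x‖) (Set.Ici 0))
    (a s : Fin p → ℝ) (Δ : ℝ) (hΔ : 0 < Δ) :
    IsUnit (1 - mexp S (2 * Δ))
    ∧ ∀ g : ℝ → ℝ, Measurable g → (∃ C : ℝ, ∀ w ∈ Set.Icc (0 : ℝ) Δ, |g w| ≤ C) →
        IntegrableOn
          (fun w : ℝ =>
            ((a ᵥ* (mexp S (Δ - w) + mexp S (Δ + w)) ᵥ* (1 - mexp S (2 * Δ))⁻¹) ⬝ᵥ s) * g w)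
          (Set.Icc 0 Δ)
        ∧ IntegrableOn
            (fun x : ℝ => ((a ᵥ* mexp S x) ⬝ᵥ s) * g (|rmod Δ x - Δ|)) (Set.Ici 0)
        ∧ (∫ w in Set.Icc (0 : ℝ) Δ,
              ((a ᵥ* (mexp S (Δ - w) + mexp S (Δ + w)) ᵥ* (1 - mexp S (2 * Δ))⁻¹) ⬝ᵥ s) * g w)
          = ∫ x in Set.Ici (0 : ℝ), ((a ᵥ* mexp S x) ⬝ᵥ s) * g (|rmod Δ x - Δ|) := by
  have h2Δ : (0:ℝ) < 2 * Δ := by linarith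
  set M : Matrix (Fin p) (Fin p) ℝ := mexp S (2 * Δ) with hMdef
  -- Step 1 : `1 - M` is invertible
  have hMn : Filter.Tendsto (fun n : ℕ => M ^ n) Filter.atTop (nhds 0) := by
    have harith : Filter.Tendsto (fun n : ℕ => (n : ℝ) * (2 * Δ)) Filter.atTop Filter.atTop :=
      Filter.Tendsto.atTop_mul_const h2Δ tendsto_natCast_atTop_atTop
    have hfe : (fun n : ℕ => M ^ n) = fun n : ℕ => mexp S ((n : ℝ) * (2 * Δ)) :=
      funext fun n => mexp_pow S (2 * Δ) n
    rw [hfe]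
    exact hS0.comp harith
  have hdet1 : Filter.Tendsto (fun n : ℕ => (M ^ n - 1).det) Filter.atTop
      (nhds ((-1 : Matrix (Fin p) (Fin p) ℝ).det)) := by
    have h1 : Filter.Tendsto (fun n : ℕ => M ^ n - 1) Filter.atTop
        (nhds (-1 : Matrix (Fin p) (Fin p) ℝ)) := by
      simpa using hMn.sub_const (1 : Matrix (Fin p) (Fin p) ℝ)
    exact ((continuous_id.matrix_det).tendsto _).comp h1
  have hne : ((-1 : Matrix (Fin p) (Fin p) ℝ).det) ≠ 0 := by
    rw [show (-1 : Matrix (Fin p) (Fin p) ℝ) = -(1 : Matrix (Fin p) (Fin p) ℝ) from rfl,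
      Matrix.det_neg]
    simp
  obtain ⟨n, hn⟩ := (hdet1.eventually_ne hne).exists
  have hdM : IsUnit (1 - M).det := by
    have h2 : (∑ i ∈ Finset.range n, M ^ i).det * (M - 1).det = (M ^ n - 1).det := by
      rw [← Matrix.det_mul, geom_sum_mul]
    have h3 : (M - 1).det ≠ 0 := fun h => hn (by rw [← h2, h, mul_zero])
    rw [show (1 - M : Matrix (Fin p) (Fin p) ℝ) = -(M - 1) from (neg_sub M 1).symm,
      Matrix.det_neg]
    exact isUnit_iff_ne_zero.2 (mul_ne_zero (pow_ne_zero _ (by norm_num)) h3)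
  refine ⟨(Matrix.isUnit_iff_isUnit_det _).2 hdM, ?_⟩
  intro g hg hCex
  obtain ⟨C, hC⟩ := hCex
  have hC0 : 0 ≤ C := le_trans (abs_nonneg _) (hC Δ ⟨hΔ.le, le_refl Δ⟩)
  set gp : ℝ → ℝ := fun x => g (|rmod Δ x - Δ|) with hgpdef
  have hrmod_mem : ∀ x : ℝ, rmod Δ x ∈ Set.Ico 0 (2 * Δ) := by
    intro x
    exact ⟨mul_nonneg h2Δ.le (Int.fract_nonneg _),
      (mul_lt_iff_lt_one_right h2Δ).2 (Int.fract_lt_one _)⟩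
  have harg : ∀ x : ℝ, |rmod Δ x - Δ| ∈ Set.Icc 0 Δ := by
    intro x
    obtain ⟨h1, h2⟩ := hrmod_mem x
    exact ⟨abs_nonneg _, abs_le.2 ⟨by linarith, by linarith⟩⟩
  have hgp_bd : ∀ x, |gp x| ≤ C := fun x => hC _ (harg x)
  have hrm_meas : Measurable fun x : ℝ => |rmod Δ x - Δ| := by
    apply Measurable.abs
    apply Measurable.sub _ measurable_const
    exact ((measurable_fract.comp (measurable_id.div_const _)).const_mul _)
  have hgp_meas : Measurable gp := hg.comp hrm_meas
  have hper : ∀ x : ℝ, gp (x + 2 * Δ) = gp x := by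
    intro x
    have h1 : (x + 2 * Δ) / (2 * Δ) = x / (2 * Δ) + 1 := by field_simp
    simp only [hgpdef, rmod, h1, Int.fract_add_one]
  have hrmod_id : ∀ x ∈ Set.Ico (0:ℝ) (2 * Δ), rmod Δ x = x := by
    intro x hx
    rw [rmod, Int.fract_eq_self.2 ⟨div_nonneg hx.1 h2Δ.le, (div_lt_one h2Δ).2 hx.2⟩]
    field_simp
  -- continuity of components
  have hEc : ∀ (c : Fin p → ℝ) (i : Fin p), Continuous fun x : ℝ => (mexp S x *ᵥ c) i :=
    fun c i => (continuous_apply i).comp ((mexp_cont S).matrix_mulVec continuous_const)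
  -- main integrability on [0, ∞)
  have key1 : ∀ (c : Fin p → ℝ) (i : Fin p),
      IntegrableOn (fun x => (mexp S x *ᵥ c) i * gp x) (Set.Ici 0) := by
    intro c i
    have hb : ∀ x : ℝ, |(mexp S x *ᵥ c) i| ≤ (∑ j, |c j|) * ‖mexp S x‖ := by
      intro x
      calc |(mexp S x *ᵥ c) i| = |∑ j, mexp S x i j * c j| := by
            simp [Matrix.mulVec, dotProduct]
        _ ≤ ∑ j, |mexp S x i j * c j| := Finset.abs_sum_le_sum_abs _ _
        _ ≤ ∑ j, ‖mexp S x‖ * |c j| := by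
            refine Finset.sum_le_sum fun j _ => ?_
            rw [abs_mul]
            exact mul_le_mul_of_nonneg_right
              (by simpa [Real.norm_eq_abs] using
                Matrix.norm_entry_le_entrywise_sup_norm (mexp S x) (i := i) (j := j))
              (abs_nonneg _)
        _ = (∑ j, |c j|) * ‖mexp S x‖ := by
            rw [Finset.sum_mul]
            exact Finset.sum_congr rfl fun j _ => mul_comm _ _
    refine Integrable.mono' (hSint.const_mul ((∑ j, |c j|) * C)) ?_ ?_
    · exact (((hEc c i).aestronglyMeasurable).mul hgp_meas.aestronglyMeasurable).restrict
    · refine Filter.Eventually.of_forall fun x => ?_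
      rw [Real.norm_eq_abs, abs_mul]
      calc |(mexp S x *ᵥ c) i| * |gp x|
          ≤ ((∑ j, |c j|) * ‖mexp S x‖) * C :=
            mul_le_mul (hb x) (hgp_bd x) (abs_nonneg _) (by positivity)
        _ = (∑ j, |c j|) * C * ‖mexp S x‖ := by ring
  have hexpand : ∀ (b : Fin p → ℝ) (x : ℝ),
      ((b ᵥ* mexp S x) ⬝ᵥ s) * gp x = ∑ j, b j * ((mexp S x *ᵥ s) j * gp x) := by
    intro b x
    rw [← Matrix.dotProduct_mulVec]
    simp [dotProduct, Finset.sum_mul, mul_assoc]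
  have key2 : ∀ (b : Fin p → ℝ),
      IntegrableOn (fun x => ((b ᵥ* mexp S x) ⬝ᵥ s) * gp x) (Set.Ici 0) := by
    intro b
    have : (fun x => ((b ᵥ* mexp S x) ⬝ᵥ s) * gp x)
        = fun x => ∑ j, b j * ((mexp S x *ᵥ s) j * gp x) := funext fun x => hexpand b x
    rw [this]
    exact integrable_finset_sum _ fun j _ => (key1 s j).const_mul (b j)
  set v : Fin p → ℝ := fun i => ∫ x in Set.Ici (0:ℝ), (mexp S x *ᵥ s) i * gp x with hv
  set u : Fin p → ℝ := fun i => ∫ x in Set.Ico (0:ℝ) (2 * Δ), (mexp S x *ᵥ s) i * gp x with hu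
  -- translation identity
  have hshift : ∀ i : Fin p,
      (∫ x in Set.Ici (2 * Δ), (mexp S x *ᵥ s) i * gp x) = (M *ᵥ v) i := by
    intro i
    have hmp : MeasurePreserving (fun x : ℝ => x + 2 * Δ) volume volume :=
      measurePreserving_add_right volume (2 * Δ)
    have hemb : MeasurableEmbedding (fun x : ℝ => x + 2 * Δ) :=
      (MeasurableEquiv.addRight (2 * Δ)).measurableEmbedding
    have hpre : (fun x : ℝ => x + 2 * Δ) ⁻¹' (Set.Ici (2 * Δ)) = Set.Ici 0 := by
      ext x; simp only [Set.mem_preimage, Set.mem_Ici]; constructor <;> intro <;> linarith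
    have hkey := hmp.setIntegral_preimage_emb hemb
      (fun x => (mexp S x *ᵥ s) i * gp x) (Set.Ici (2 * Δ))
    rw [hpre] at hkey
    rw [← hkey]
    have heq : ∀ x : ℝ, (mexp S (x + 2 * Δ) *ᵥ s) i * gp (x + 2 * Δ)
        = ∑ j, M i j * ((mexp S x *ᵥ s) j * gp x) := by
      intro x
      rw [hper x]
      have hsplit : mexp S (x + 2 * Δ) = M * mexp S x := by
        rw [add_comm, hMdef, ← mexp_add]
      rw [hsplit, ← Matrix.mulVec_mulVec]
      simp [Matrix.mulVec, dotProduct, Finset.sum_mul, mul_assoc]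
    calc (∫ x in Set.Ici (0:ℝ), (mexp S (x + 2 * Δ) *ᵥ s) i * gp (x + 2 * Δ))
        = ∫ x in Set.Ici (0:ℝ), ∑ j, M i j * ((mexp S x *ᵥ s) j * gp x) := by
          simp only [heq]
      _ = ∑ j, ∫ x in Set.Ici (0:ℝ), M i j * ((mexp S x *ᵥ s) j * gp x) :=
          integral_finset_sum _ fun j _ => ((key1 s j).const_mul (M i j))
      _ = ∑ j, M i j * v j := by
          refine Finset.sum_congr rfl fun j _ => ?_
          rw [integral_const_mul]
      _ = (M *ᵥ v) i := by simp [Matrix.mulVec, dotProduct]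
  have hsplitv : ∀ i : Fin p, v i = u i + (M *ᵥ v) i := by
    intro i
    have hun : Set.Ico (0:ℝ) (2 * Δ) ∪ Set.Ici (2 * Δ) = Set.Ici 0 :=
      Set.Ico_union_Ici_eq_Ici h2Δ.le
    have hdisj : Disjoint (Set.Ico (0:ℝ) (2 * Δ)) (Set.Ici (2 * Δ)) :=
      Set.disjoint_left.2 fun x hx hx' => absurd hx.2 (not_lt.2 hx')
    calc v i = ∫ x in Set.Ico (0:ℝ) (2 * Δ) ∪ Set.Ici (2 * Δ),
          (mexp S x *ᵥ s) i * gp x := by rw [hun]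
      _ = (∫ x in Set.Ico (0:ℝ) (2 * Δ), (mexp S x *ᵥ s) i * gp x)
          + ∫ x in Set.Ici (2 * Δ), (mexp S x *ᵥ s) i * gp x :=
          setIntegral_union hdisj measurableSet_Ici
            (MeasureTheory.IntegrableOn.mono_set (key1 s i) fun x hx => hx.1)
            (MeasureTheory.IntegrableOn.mono_set (key1 s i) (Set.Ici_subset_Ici.2 h2Δ.le))
      _ = u i + (M *ᵥ v) i := by rw [hshift i]
  have hvec : (1 - M) *ᵥ v = u := by
    funext i
    rw [Matrix.sub_mulVec, Matrix.one_mulVec]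
    have := hsplitv i
    simp only [Pi.sub_apply]
    linarith
  have hvsol : v = (1 - M)⁻¹ *ᵥ u := by
    rw [← hvec, Matrix.mulVec_mulVec, Matrix.nonsing_inv_mul _ hdM, Matrix.one_mulVec]
  set b : Fin p → ℝ := a ᵥ* (1 - M)⁻¹ with hbdef
  -- RHS = b ⬝ᵥ u
  have hRHS : (∫ x in Set.Ici (0:ℝ), ((a ᵥ* mexp S x) ⬝ᵥ s) * gp x) = b ⬝ᵥ u := by
    have e1 : (∫ x in Set.Ici (0:ℝ), ((a ᵥ* mexp S x) ⬝ᵥ s) * gp x) = a ⬝ᵥ v := by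
      calc (∫ x in Set.Ici (0:ℝ), ((a ᵥ* mexp S x) ⬝ᵥ s) * gp x)
          = ∫ x in Set.Ici (0:ℝ), ∑ j, a j * ((mexp S x *ᵥ s) j * gp x) := by
            simp only [hexpand a]
        _ = ∑ j, ∫ x in Set.Ici (0:ℝ), a j * ((mexp S x *ᵥ s) j * gp x) :=
            integral_finset_sum _ fun j _ => ((key1 s j).const_mul (a j))
        _ = ∑ j, a j * v j := by
            refine Finset.sum_congr rfl fun j _ => ?_
            rw [integral_const_mul]
        _ = a ⬝ᵥ v := by simp [dotProduct]
    rw [e1, hvsol, Matrix.dotProduct_mulVec]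
  have hbu : b ⬝ᵥ u = ∫ x in Set.Ico (0:ℝ) (2 * Δ), ((b ᵥ* mexp S x) ⬝ᵥ s) * gp x := by
    calc b ⬝ᵥ u = ∑ j, b j * u j := by simp [dotProduct]
      _ = ∑ j, ∫ x in Set.Ico (0:ℝ) (2 * Δ), b j * ((mexp S x *ᵥ s) j * gp x) := by
          refine Finset.sum_congr rfl fun j _ => ?_
          rw [integral_const_mul]
      _ = ∫ x in Set.Ico (0:ℝ) (2 * Δ), ∑ j, b j * ((mexp S x *ᵥ s) j * gp x) :=
          (integral_finset_sum _ fun j _ =>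
            ((MeasureTheory.IntegrableOn.mono_set (key1 s j) (fun x hx => hx.1)).const_mul (b j))).symm
      _ = ∫ x in Set.Ico (0:ℝ) (2 * Δ), ((b ᵥ* mexp S x) ⬝ᵥ s) * gp x := by
          simp only [hexpand b]
  -- split [0, 2Δ) = [0, Δ) ∪ [Δ, 2Δ)
  have hIcoSplit : (∫ x in Set.Ico (0:ℝ) (2 * Δ), ((b ᵥ* mexp S x) ⬝ᵥ s) * gp x)
      = (∫ x in Set.Ico (0:ℝ) Δ, ((b ᵥ* mexp S x) ⬝ᵥ s) * gp x)
        + ∫ x in Set.Ico Δ (2 * Δ), ((b ᵥ* mexp S x) ⬝ᵥ s) * gp x := by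
    rw [← setIntegral_union (Set.disjoint_left.2 fun x hx hx' => absurd hx.2 (not_lt.2 hx'.1)) measurableSet_Ico
      (MeasureTheory.IntegrableOn.mono_set (key2 b) fun x hx => hx.1)
      (MeasureTheory.IntegrableOn.mono_set (key2 b) fun x hx => le_trans hΔ.le hx.1),
      Set.Ico_union_Ico_eq_Ico hΔ.le (by linarith)]
  -- substitution x = Δ - w on [0, Δ)
  have hA : (∫ x in Set.Ico (0:ℝ) Δ, ((b ᵥ* mexp S x) ⬝ᵥ s) * gp x)
      = ∫ w in Set.Icc (0:ℝ) Δ, ((b ᵥ* mexp S (Δ - w)) ⬝ᵥ s) * g w := by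
    have hmp : MeasurePreserving (fun w : ℝ => Δ - w) volume volume :=
      Measure.measurePreserving_sub_left volume Δ
    have hemb : MeasurableEmbedding (fun w : ℝ => Δ - w) :=
      (MeasurableEquiv.subLeft Δ).measurableEmbedding
    have hpre : (fun w : ℝ => Δ - w) ⁻¹' (Set.Ico 0 Δ) = Set.Ioc 0 Δ := by
      ext w
      simp only [Set.mem_preimage, Set.mem_Ico, Set.mem_Ioc]
      constructor <;> rintro ⟨h1, h2⟩ <;> constructor <;> linarith
    have hkey := hmp.setIntegral_preimage_emb hemb
      (fun x => ((b ᵥ* mexp S x) ⬝ᵥ s) * gp x) (Set.Ico 0 Δ)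
    rw [hpre] at hkey
    rw [← hkey, integral_Icc_eq_integral_Ioc]
    refine setIntegral_congr_fun measurableSet_Ioc fun w hw => ?_
    have hmem : Δ - w ∈ Set.Ico (0:ℝ) (2 * Δ) := ⟨by linarith [hw.2], by linarith [hw.1]⟩
    have : gp (Δ - w) = g w := by
      simp only [hgpdef, hrmod_id _ hmem]
      rw [show Δ - w - Δ = -w by ring, abs_neg, abs_of_pos hw.1]
    rw [this]
  -- substitution x = Δ + w on [Δ, 2Δ)
  have hB : (∫ x in Set.Ico Δ (2 * Δ), ((b ᵥ* mexp S x) ⬝ᵥ s) * gp x)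
      = ∫ w in Set.Icc (0:ℝ) Δ, ((b ᵥ* mexp S (Δ + w)) ⬝ᵥ s) * g w := by
    have hmp : MeasurePreserving (fun w : ℝ => w + Δ) volume volume :=
      measurePreserving_add_right volume Δ
    have hemb : MeasurableEmbedding (fun w : ℝ => w + Δ) :=
      (MeasurableEquiv.addRight Δ).measurableEmbedding
    have hpre : (fun w : ℝ => w + Δ) ⁻¹' (Set.Ico Δ (2 * Δ)) = Set.Ico 0 Δ := by
      ext w
      simp only [Set.mem_preimage, Set.mem_Ico]
      constructor <;> rintro ⟨h1, h2⟩ <;> constructor <;> linarith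
    have hkey := hmp.setIntegral_preimage_emb hemb
      (fun x => ((b ᵥ* mexp S x) ⬝ᵥ s) * gp x) (Set.Ico Δ (2 * Δ))
    rw [hpre] at hkey
    rw [← hkey, integral_Icc_eq_integral_Ico]
    refine setIntegral_congr_fun measurableSet_Ico fun w hw => ?_
    have hmem : w + Δ ∈ Set.Ico (0:ℝ) (2 * Δ) := ⟨by linarith [hw.1], by linarith [hw.2]⟩
    have : gp (w + Δ) = g w := by
      simp only [hgpdef, hrmod_id _ hmem]
      rw [show w + Δ - Δ = w by ring, abs_of_nonneg hw.1]
    rw [this, add_comm w Δ]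
  -- integrability of continuous × bounded on the compact interval
  have cbd : ∀ φ : ℝ → ℝ, Continuous φ →
      IntegrableOn (fun w => φ w * g w) (Set.Icc 0 Δ) := by
    intro φ hφ
    obtain ⟨K, hK⟩ := (isCompact_Icc (a := (0:ℝ)) (b := Δ)).exists_bound_of_continuousOn
      hφ.continuousOn
    have hK0 : 0 ≤ K := le_trans (norm_nonneg _) (hK 0 ⟨le_refl _, hΔ.le⟩)
    refine Integrable.mono' (g := fun _ => K * C)
      (integrableOn_const measure_Icc_lt_top.ne)
      ((hφ.measurable.mul hg).aestronglyMeasurable.restrict) ?_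
    rw [ae_restrict_iff' measurableSet_Icc]
    refine Filter.Eventually.of_forall fun w hw => ?_
    rw [Real.norm_eq_abs, abs_mul]
    exact mul_le_mul (by simpa [Real.norm_eq_abs] using hK w hw) (hC w hw) (abs_nonneg _) hK0
  -- commutation with the inverse
  have hcommM : ∀ t : ℝ, mexp S t * M = M * mexp S t := by
    intro t
    rw [hMdef, ← mexp_add, ← mexp_add, add_comm]
  have hcommInv : ∀ N : Matrix (Fin p) (Fin p) ℝ, N * M = M * N →
      N * (1 - M)⁻¹ = (1 - M)⁻¹ * N := by
    intro N hNM
    have h1 : N * (1 - M) = (1 - M) * N := by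
      rw [mul_sub, sub_mul, mul_one, one_mul, hNM]
    have hil := Matrix.nonsing_inv_mul (1 - M) hdM
    have hir := Matrix.mul_nonsing_inv (1 - M) hdM
    calc N * (1 - M)⁻¹ = (1 - M)⁻¹ * (1 - M) * N * (1 - M)⁻¹ := by
          rw [hil, one_mul]
      _ = (1 - M)⁻¹ * (N * (1 - M)) * (1 - M)⁻¹ := by
          rw [mul_assoc ((1 - M)⁻¹) (1 - M) N, ← h1]
      _ = (1 - M)⁻¹ * N := by
          rw [mul_assoc ((1 - M)⁻¹) (N * (1 - M)) ((1 - M)⁻¹),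
            mul_assoc N (1 - M) ((1 - M)⁻¹), hir, mul_one]
  have hfin : ∀ w : ℝ,
      ((a ᵥ* (mexp S (Δ - w) + mexp S (Δ + w)) ᵥ* (1 - M)⁻¹) ⬝ᵥ s)
        = (b ᵥ* (mexp S (Δ - w) + mexp S (Δ + w))) ⬝ᵥ s := by
    intro w
    have hcomm : (mexp S (Δ - w) + mexp S (Δ + w)) * (1 - M)⁻¹
        = (1 - M)⁻¹ * (mexp S (Δ - w) + mexp S (Δ + w)) := by
      apply hcommInv
      rw [add_mul, mul_add, hcommM, hcommM]
    rw [hbdef, Matrix.vecMul_vecMul, Matrix.vecMul_vecMul, hcomm]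
  -- continuity of the LHS kernel
  have hker_cont : Continuous fun w : ℝ =>
      (b ᵥ* (mexp S (Δ - w) + mexp S (Δ + w))) ⬝ᵥ s := by
    have h1 : Continuous fun w : ℝ => mexp S (Δ - w) :=
      (mexp_cont S).comp (continuous_const.sub continuous_id)
    have h2 : Continuous fun w : ℝ => mexp S (Δ + w) :=
      (mexp_cont S).comp (continuous_const.add continuous_id)
    exact (continuous_const.matrix_vecMul (h1.add h2)).dotProduct continuous_const
  -- assemble
  have hLHSint : IntegrableOn
      (fun w : ℝ =>
        ((a ᵥ* (mexp S (Δ - w) + mexp S (Δ + w)) ᵥ* (1 - M)⁻¹) ⬝ᵥ s) * g w)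
      (Set.Icc 0 Δ) := by
    exact (cbd _ hker_cont).congr_fun (fun w _ => by rw [hfin w]) measurableSet_Icc
  refine ⟨hLHSint, key2 a, ?_⟩
  have hsum : (∫ w in Set.Icc (0:ℝ) Δ, ((b ᵥ* mexp S (Δ - w)) ⬝ᵥ s) * g w)
      + (∫ w in Set.Icc (0:ℝ) Δ, ((b ᵥ* mexp S (Δ + w)) ⬝ᵥ s) * g w)
      = ∫ w in Set.Icc (0:ℝ) Δ, ((b ᵥ* (mexp S (Δ - w) + mexp S (Δ + w))) ⬝ᵥ s) * g w := by
    have hphi1 : Continuous fun w : ℝ => (b ᵥ* mexp S (Δ - w)) ⬝ᵥ s :=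
      (continuous_const.matrix_vecMul ((mexp_cont S).comp
        (continuous_const.sub continuous_id))).dotProduct continuous_const
    have hphi2 : Continuous fun w : ℝ => (b ᵥ* mexp S (Δ + w)) ⬝ᵥ s :=
      (continuous_const.matrix_vecMul ((mexp_cont S).comp
        (continuous_const.add continuous_id))).dotProduct continuous_const
    rw [← integral_add (cbd (fun w : ℝ => (b ᵥ* mexp S (Δ - w)) ⬝ᵥ s) hphi1)
      (cbd (fun w : ℝ => (b ᵥ* mexp S (Δ + w)) ⬝ᵥ s) hphi2)]
    refine setIntegral_congr_fun measurableSet_Icc fun w _ => ?_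
    rw [Matrix.vecMul_add, add_dotProduct]
    ring
  calc (∫ w in Set.Icc (0:ℝ) Δ,
        ((a ᵥ* (mexp S (Δ - w) + mexp S (Δ + w)) ᵥ* (1 - M)⁻¹) ⬝ᵥ s) * g w)
      = ∫ w in Set.Icc (0:ℝ) Δ, ((b ᵥ* (mexp S (Δ - w) + mexp S (Δ + w))) ⬝ᵥ s) * g w := by
        refine setIntegral_congr_fun measurableSet_Icc fun w _ => ?_
        rw [hfin w]
    _ = (∫ w in Set.Icc (0:ℝ) Δ, ((b ᵥ* mexp S (Δ - w)) ⬝ᵥ s) * g w)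
        + ∫ w in Set.Icc (0:ℝ) Δ, ((b ᵥ* mexp S (Δ + w)) ⬝ᵥ s) * g w := hsum.symm
    _ = (∫ x in Set.Ico (0:ℝ) Δ, ((b ᵥ* mexp S x) ⬝ᵥ s) * gp x)
        + ∫ x in Set.Ico Δ (2 * Δ), ((b ᵥ* mexp S x) ⬝ᵥ s) * gp x := by rw [hA, hB]
    _ = ∫ x in Set.Ico (0:ℝ) (2 * Δ), ((b ᵥ* mexp S x) ⬝ᵥ s) * gp x := hIcoSplit.symm
    _ = b ⬝ᵥ u := hbu.symm
    _ = ∫ x in Set.Ici (0:ℝ), ((a ᵥ* mexp S x) ⬝ᵥ s) * gp x := hRHS.symm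
end

section
/- (Lemma: the closing operator evaluates g at the grid point.) Suppose 0 < v^{1/3} < 1 and let t satisfy 0 ≤ t < Δ − v^{1/3}. Let g : [0,Δ] → ℝ be bounded with |g(x)| ≤ G and Lipschitz continuous with |g(x) − g(y)| ≤ L|x−y| for all x, y ∈ [0,Δ]. Then ℙ(Z ≥ t) > 0 and | 𝔼[ g(|((Z−t) mod 2Δ) − Δ|) | Z ≥ t ] − g(t) | ≤ (2G + L) · v^{1/3} / (1 − v^{1/3}). -/
open MeasureTheory ProbabilityTheory

lemma rmod_nonneg {Δ : ℝ} (hΔ : 0 < Δ) (x : ℝ) : 0 ≤ rmod Δ x :=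
  mul_nonneg (by linarith) (Int.fract_nonneg _)

lemma rmod_lt {Δ : ℝ} (hΔ : 0 < Δ) (x : ℝ) : rmod Δ x < 2 * Δ := by
  have h := Int.fract_lt_one (x / (2 * Δ))
  have h2 : (0:ℝ) < 2 * Δ := by linarith
  calc rmod Δ x < 2 * Δ * 1 := by
        exact mul_lt_mul_of_pos_left h h2
    _ = 2 * Δ := mul_one _

lemma rmod_eq_self {Δ x : ℝ} (hΔ : 0 < Δ) (h0 : 0 ≤ x) (h2 : x < 2 * Δ) : rmod Δ x = x := by
  have h2Δ : (0:ℝ) < 2 * Δ := by linarith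
  unfold rmod
  rw [Int.fract_eq_self.2 ⟨div_nonneg h0 h2Δ.le, (div_lt_one h2Δ).2 h2⟩]
  field_simp

/-- the closing operator evaluates `g` at the grid point:
`|𝔼[g(|((Z-t) mod 2Δ) - Δ|) ∣ Z ≥ t] - g(t)| ≤ (2G + L)·v^{1/3}/(1 - v^{1/3})`. -/
theorem closing_operator_evaluates
    {Ω : Type*} [MeasureSpace Ω] [IsProbabilityMeasure (ℙ : Measure Ω)]
    (Z : Ω → ℝ) (hZmeas : Measurable Z)
    (hZnn : ∀ᵐ ω ∂ℙ, 0 ≤ Z ω)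
    (hZint : Integrable Z) (hZsq : Integrable (fun ω => (Z ω) ^ 2))
    (Δ v : ℝ) (hΔ : Δ = ∫ ω, Z ω) (hΔpos : 0 < Δ)
    (hv : v = variance Z ℙ) (hvpos : 0 < v) (hvlt : v ^ ((1 : ℝ) / 3) < 1)
    (t : ℝ) (ht0 : 0 ≤ t) (ht : t < Δ - v ^ ((1 : ℝ) / 3))
    (g : ℝ → ℝ) (hgmeas : Measurable g)
    (G L : ℝ)
    (hG : ∀ x ∈ Set.Icc (0 : ℝ) Δ, |g x| ≤ G)
    (hL : ∀ x ∈ Set.Icc (0 : ℝ) Δ, ∀ y ∈ Set.Icc (0 : ℝ) Δ, |g x - g y| ≤ L * |x - y|) :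
    0 < (ℙ {ω | t ≤ Z ω}).toReal
    ∧ |(∫ ω in {ω | t ≤ Z ω}, g (|rmod Δ (Z ω - t) - Δ|)) / (ℙ {ω | t ≤ Z ω}).toReal
        - g t|
      ≤ (2 * G + L) * v ^ ((1 : ℝ) / 3) / (1 - v ^ ((1 : ℝ) / 3)) := by
  set ε := v ^ ((1 : ℝ) / 3) with hεdef
  have hε0 : 0 < ε := Real.rpow_pos_of_pos hvpos _
  have hε1 : ε < 1 := hvlt
  have hεv : ε ^ 3 = v := by
    rw [hεdef, ← Real.rpow_natCast (v ^ ((1:ℝ)/3)) 3, ← Real.rpow_mul hvpos.le]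
    norm_num
  have htΔ : t < Δ - ε := ht
  -- sets
  have hA : MeasurableSet {ω | t ≤ Z ω} := measurableSet_le measurable_const hZmeas
  set A := {ω | t ≤ Z ω} with hAdef
  have hB : MeasurableSet {ω | |Z ω - Δ| < ε} :=
    measurableSet_lt ((hZmeas.sub measurable_const).abs) measurable_const
  set B := {ω | |Z ω - Δ| < ε} with hBdef
  have hBA : B ⊆ A := by
    intro ω hω
    simp only [hBdef, Set.mem_setOf_eq] at hω
    simp only [hAdef, Set.mem_setOf_eq]
    have := abs_lt.1 hω
    linarith [this.1]
  -- Chebyshev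
  have hZ2 : MemLp Z 2 ℙ := (memLp_two_iff_integrable_sq hZint.aestronglyMeasurable).2 hZsq
  have hcheb : ℙ Bᶜ ≤ ENNReal.ofReal ε := by
    have h := meas_ge_le_variance_div_sq (μ := ℙ) hZ2 hε0
    have hBc : Bᶜ = {ω | ε ≤ |Z ω - ∫ ω, Z ω|} := by
      ext ω
      simp [hBdef, Set.mem_setOf_eq, not_lt, hΔ]
    rw [hBc]
    refine le_trans h (le_of_eq ?_)
    congr 1
    rw [← hv, ← hεv, div_eq_iff (pow_ne_zero 2 hε0.ne')]
    ring
  have hBc_real : (ℙ Bᶜ).toReal ≤ ε := ENNReal.toReal_le_of_le_ofReal hε0.le hcheb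
  have hB_real : 1 - ε ≤ (ℙ B).toReal := by
    have h1 : (ℙ B).toReal + (ℙ Bᶜ).toReal = 1 := by
      rw [← ENNReal.toReal_add (measure_ne_top _ _) (measure_ne_top _ _),
        prob_add_prob_compl hB]
      simp
    linarith
  have hpA : 1 - ε ≤ (ℙ A).toReal :=
    le_trans hB_real (ENNReal.toReal_mono (measure_ne_top _ _) (measure_mono hBA))
  have hp0 : 0 < (ℙ A).toReal := lt_of_lt_of_le (by linarith) hpA
  -- nonnegativity of constants
  have hG0 : 0 ≤ G := le_trans (abs_nonneg _) (hG 0 ⟨le_refl _, hΔpos.le⟩)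
  have hL0 : 0 ≤ L := by
    have h := hL 0 ⟨le_refl _, hΔpos.le⟩ Δ ⟨hΔpos.le, le_refl _⟩
    rw [zero_sub, abs_neg, abs_of_pos hΔpos] at h
    have h2 : 0 ≤ L * Δ := le_trans (abs_nonneg _) h
    by_contra hc
    push_neg at hc
    nlinarith
  have htIcc : t ∈ Set.Icc (0:ℝ) Δ := ⟨ht0, by linarith⟩
  -- the integrand
  set F : Ω → ℝ := fun ω => g (|rmod Δ (Z ω - t) - Δ|) with hFdef
  have hmem : ∀ ω, |rmod Δ (Z ω - t) - Δ| ∈ Set.Icc (0:ℝ) Δ := by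
    intro ω
    have h1 := rmod_nonneg hΔpos (Z ω - t)
    have h2 := rmod_lt hΔpos (Z ω - t)
    refine ⟨abs_nonneg _, ?_⟩
    rw [abs_le]
    constructor <;> linarith
  have hFbound : ∀ ω, |F ω| ≤ G := fun ω => hG _ (hmem ω)
  have hFmeas : Measurable F := by
    apply hgmeas.comp
    apply Measurable.abs
    apply Measurable.sub_const
    simp only [rmod]
    exact measurable_const.mul ((hZmeas.sub measurable_const).div_const _).fract
  have hFint : Integrable F := by
    refine Integrable.mono' (integrable_const G) hFmeas.aestronglyMeasurable ?_
    exact Filter.Eventually.of_forall fun ω => by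
      rw [Real.norm_eq_abs]; exact hFbound ω
  -- pointwise bounds
  have hptB : ∀ ω ∈ A ∩ B, |F ω - g t| ≤ L * ε := by
    intro ω hω
    have hωB : |Z ω - Δ| < ε := hω.2
    have hab := abs_lt.1 hωB
    have h1 : 0 ≤ Z ω - t := by linarith [hab.1]
    have h2 : Z ω - t < 2 * Δ := by linarith [hab.2]
    have h3 : rmod Δ (Z ω - t) = Z ω - t := rmod_eq_self hΔpos h1 h2
    have hmemω := hmem ω
    rw [h3] at hmemω
    have h4 : |(|Z ω - t - Δ|) - t| ≤ |Z ω - Δ| := by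
      have h5 := abs_abs_sub_abs_le_abs_sub (Z ω - t - Δ) (-t)
      rw [abs_neg, abs_of_nonneg ht0] at h5
      have h6 : Z ω - t - Δ - -t = Z ω - Δ := by ring
      rwa [h6] at h5
    have h7 : |F ω - g t| ≤ L * |(|Z ω - t - Δ|) - t| := by
      have := hL (|Z ω - t - Δ|) hmemω t htIcc
      simpa [hFdef, h3] using this
    refine le_trans h7 (mul_le_mul_of_nonneg_left ?_ hL0)
    exact le_trans h4 hωB.le
  have hptA : ∀ ω, |F ω - g t| ≤ 2 * G := by
    intro ω
    have h1 := hFbound ω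
    have h2 := hG t htIcc
    calc |F ω - g t| ≤ |F ω| + |g t| := abs_sub _ _
      _ ≤ 2 * G := by linarith
  -- split the integral
  have hdisj : Disjoint (A ∩ B) (A \ B) := by
    refine Set.disjoint_left.2 fun ω h h' => h'.2 h.2
  have hunion : (A ∩ B) ∪ (A \ B) = A := Set.inter_union_diff A B
  have hIsplit : ∫ ω in A, (F ω - g t) ∂ℙ
      = (∫ ω in A ∩ B, (F ω - g t) ∂ℙ) + ∫ ω in A \ B, (F ω - g t) ∂ℙ := by
    have h := setIntegral_union (f := fun ω => F ω - g t) (μ := ℙ) hdisj (hA.diff hB)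
      ((hFint.sub (integrable_const (g t))).integrableOn)
      ((hFint.sub (integrable_const (g t))).integrableOn)
    rw [hunion] at h
    exact h
  have hI1 : |∫ ω in A ∩ B, (F ω - g t) ∂ℙ| ≤ (L * ε) * (ℙ (A ∩ B)).toReal := by
    have h := norm_setIntegral_le_of_norm_le_const (μ := ℙ) (s := A ∩ B)
      (C := L * ε) (measure_lt_top _ _)
      (fun ω hω => by rw [Real.norm_eq_abs]; exact hptB ω hω)
    simpa [Real.norm_eq_abs, Measure.real] using h
  have hI2 : |∫ ω in A \ B, (F ω - g t) ∂ℙ| ≤ (2 * G) * (ℙ (A \ B)).toReal := by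
    have h := norm_setIntegral_le_of_norm_le_const (μ := ℙ) (s := A \ B)
      (C := 2 * G) (measure_lt_top _ _)
      (fun ω _ => by rw [Real.norm_eq_abs]; exact hptA ω)
    simpa [Real.norm_eq_abs, Measure.real] using h
  have hm1 : (ℙ (A ∩ B)).toReal ≤ (ℙ A).toReal :=
    ENNReal.toReal_mono (measure_ne_top _ _) (measure_mono Set.inter_subset_left)
  have hm2 : (ℙ (A \ B)).toReal ≤ ε := by
    refine le_trans (ENNReal.toReal_mono (measure_ne_top _ _)
      (measure_mono fun ω h => h.2)) hBc_real
  have hsub : ∫ ω in A, (F ω - g t) ∂ℙ = (∫ ω in A, F ω ∂ℙ) - g t * (ℙ A).toReal := by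
    rw [integral_sub hFint.integrableOn (integrableOn_const (measure_ne_top _ _)),
      setIntegral_const, measureReal_def, smul_eq_mul, mul_comm]
  have hnum : |(∫ ω in A, F ω ∂ℙ) - g t * (ℙ A).toReal| ≤ L * ε * (ℙ A).toReal + 2 * G * ε := by
    rw [← hsub, hIsplit]
    calc |(∫ ω in A ∩ B, (F ω - g t) ∂ℙ) + ∫ ω in A \ B, (F ω - g t) ∂ℙ|
        ≤ |∫ ω in A ∩ B, (F ω - g t) ∂ℙ| + |∫ ω in A \ B, (F ω - g t) ∂ℙ| := abs_add_le _ _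
      _ ≤ (L * ε) * (ℙ (A ∩ B)).toReal + (2 * G) * (ℙ (A \ B)).toReal := add_le_add hI1 hI2
      _ ≤ L * ε * (ℙ A).toReal + 2 * G * ε := by
          refine add_le_add (mul_le_mul_of_nonneg_left hm1 (by positivity))
            (mul_le_mul_of_nonneg_left hm2 (by positivity))
  refine ⟨hp0, ?_⟩
  have hrw : (∫ ω in A, F ω ∂ℙ) / (ℙ A).toReal - g t
      = ((∫ ω in A, F ω ∂ℙ) - g t * (ℙ A).toReal) / (ℙ A).toReal := by
    field_simp
  rw [hrw, abs_div, abs_of_pos hp0, div_le_iff₀ hp0]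
  calc |(∫ ω in A, F ω ∂ℙ) - g t * (ℙ A).toReal| ≤ L * ε * (ℙ A).toReal + 2 * G * ε := hnum
    _ ≤ (2 * G + L) * ε / (1 - ε) * (ℙ A).toReal := by
        rw [div_mul_eq_mul_div, le_div_iff₀ (by linarith : (0:ℝ) < 1 - ε)]
        nlinarith [mul_nonneg (mul_nonneg hG0 hε0.le) (by linarith : (0:ℝ) ≤ (ℙ A).toReal - (1 - ε)),
          mul_nonneg (mul_nonneg (mul_nonneg hL0 hε0.le) hp0.le) hε0.le]
end

section
/- (Corollary: the simple function f_p approximates f.) Suppose 0 < v^{1/3} < 1. Let K ≥ 1, b = KΔ, and set y_k := (k−1)Δ for k = 1,…,K+1. Let 0 = t_1 < t_2 < ⋯ < t_p < Δ − v^{1/3} and t_{p+1} := Δ. Let f : [0,b] → ℝ be bounded with |f| ≤ G and Lipschitz with constant L. Define the simple function f_p by f_p(x) := 𝔼[ f(y_ℓ + |((Z−t_n) mod 2Δ) − Δ|) | Z ≥ t_n ] for x ∈ [y_ℓ + t_n, y_ℓ + t_{n+1}), ℓ = 1,…,K, n = 1,…,p. Then for every ℓ and n and every x ∈ [y_ℓ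 + t_n, y_ℓ + t_{n+1}), |f_p(x) − f(y_ℓ + t_n)| ≤ (2G + L) · v^{1/3} / (1 − v^{1/3}). -/
open MeasureTheory ProbabilityTheory

set_option maxHeartbeats 1600000 in
/-- the simple function `f_p` approximates `f`:
on each cell `[y_ℓ + t_n, y_ℓ + t_{n+1})` the value of the simple function
`f_p(x) = 𝔼[f(y_ℓ + |((Z - t_n) mod 2Δ) - Δ|) ∣ Z ≥ t_n]` is within
`(2G + L)·v^{1/3}/(1 - v^{1/3})` of `f(y_ℓ + t_n)`. -/
theorem simple_function_approximates
    {Ω : Type*} [MeasureSpace Ω] [IsProbabilityMeasure (ℙ : Measure Ω)]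
    (Z : Ω → ℝ) (hZmeas : Measurable Z)
    (hZnn : ∀ᵐ ω ∂ℙ, 0 ≤ Z ω)
    (hZint : Integrable Z) (hZsq : Integrable (fun ω => (Z ω) ^ 2))
    (Δ v : ℝ) (hΔ : Δ = ∫ ω, Z ω) (hΔpos : 0 < Δ)
    (hv : v = variance Z ℙ) (hvpos : 0 < v) (hvlt : v ^ ((1 : ℝ) / 3) < 1)
    (K : ℕ) (hK : 1 ≤ K) (b : ℝ) (hb : b = (K : ℝ) * Δ)
    (y : ℕ → ℝ) (hy : ∀ k, y k = ((k : ℝ) - 1) * Δ)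
    (p : ℕ) (hp : 1 ≤ p) (t : ℕ → ℝ)
    (ht1 : t 1 = 0)
    (htmono : ∀ m ∈ Set.Icc 1 p, ∀ n ∈ Set.Icc 1 p, m < n → t m < t n)
    (htp : t p < Δ - v ^ ((1 : ℝ) / 3))
    (htp1 : t (p + 1) = Δ)
    (f : ℝ → ℝ) (hfmeas : Measurable f)
    (G L : ℝ)
    (hG : ∀ x ∈ Set.Icc (0 : ℝ) b, |f x| ≤ G)
    (hL : ∀ x ∈ Set.Icc (0 : ℝ) b, ∀ x' ∈ Set.Icc (0 : ℝ) b, |f x - f x'| ≤ L * |x - x'|)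
    (fp : ℝ → ℝ)
    (hfp : ∀ ℓ ∈ Set.Icc 1 K, ∀ n ∈ Set.Icc 1 p,
      ∀ x ∈ Set.Ico (y ℓ + t n) (y ℓ + t (n + 1)),
        fp x = (∫ ω in {ω | t n ≤ Z ω}, f (y ℓ + |rmod Δ (Z ω - t n) - Δ|))
                  / (ℙ {ω | t n ≤ Z ω}).toReal) :
    ∀ ℓ ∈ Set.Icc 1 K, ∀ n ∈ Set.Icc 1 p,
      ∀ x ∈ Set.Ico (y ℓ + t n) (y ℓ + t (n + 1)),
        |fp x - f (y ℓ + t n)|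
          ≤ (2 * G + L) * v ^ ((1 : ℝ) / 3) / (1 - v ^ ((1 : ℝ) / 3)) := by

  intro l hl n hn x hx
  set ε := v ^ ((1 : ℝ) / 3) with hεdef
  have hεpos : 0 < ε := Real.rpow_pos_of_pos hvpos _
  have hε1 : ε < 1 := hvlt
  -- v / ε² = ε
  have hveq : v / ε ^ 2 = ε := by
    have h23 : ε ^ 2 = v ^ ((2 : ℝ) / 3) := by
      rw [hεdef, ← Real.rpow_natCast (v ^ ((1 : ℝ) / 3)) 2, ← Real.rpow_mul hvpos.le]
      norm_num
    calc v / ε ^ 2 = v ^ (1 : ℝ) / v ^ ((2 : ℝ) / 3) := by rw [h23, Real.rpow_one]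
      _ = v ^ ((1 : ℝ) - 2 / 3) := (Real.rpow_sub hvpos _ _).symm
      _ = ε := by rw [hεdef]; norm_num
  -- facts about t n
  have hn1 : 1 ≤ n := hn.1
  have hnp : n ≤ p := hn.2
  have htn0 : 0 ≤ t n := by
    rcases eq_or_lt_of_le hn1 with h | h
    · rw [← h, ht1]
    · have := htmono 1 ⟨le_refl 1, hp⟩ n hn h
      rw [ht1] at this; exact this.le
  have htnp : t n ≤ t p := by
    rcases eq_or_lt_of_le hnp with h | h
    · rw [h]
    · exact (htmono n hn p ⟨hp, le_refl p⟩ h).le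
  have htnΔ : t n < Δ - ε := lt_of_le_of_lt htnp htp
  have hεΔ : ε < Δ := by linarith
  -- facts about b, y, G, L
  have hK1 : (1 : ℝ) ≤ (K : ℝ) := by exact_mod_cast hK
  have hΔb : Δ ≤ b := by rw [hb]; nlinarith
  have hbpos : 0 < b := lt_of_lt_of_le hΔpos hΔb
  have hG0 : 0 ≤ G := le_trans (abs_nonneg _) (hG 0 ⟨le_refl 0, hbpos.le⟩)
  have hL0 : 0 ≤ L := by
    have h1 := hL b ⟨hbpos.le, le_refl b⟩ 0 ⟨le_refl 0, hbpos.le⟩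
    have h2 := abs_nonneg (f b - f 0)
    rw [sub_zero, abs_of_pos hbpos] at h1
    nlinarith
  have hl1 : (1 : ℝ) ≤ (l : ℝ) := by exact_mod_cast hl.1
  have hlK : (l : ℝ) ≤ (K : ℝ) := by exact_mod_cast hl.2
  have hy0 : 0 ≤ y l := by rw [hy]; nlinarith
  have hyb : y l + Δ ≤ b := by rw [hy, hb]; nlinarith
  have hmemc : y l + t n ∈ Set.Icc (0 : ℝ) b := ⟨by linarith, by linarith⟩
  -- rmod facts
  have hrmod : ∀ z : ℝ, y l + |rmod Δ z - Δ| ∈ Set.Icc (0 : ℝ) b := by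
    intro z
    have h0 : 0 ≤ rmod Δ z := mul_nonneg (by linarith) (Int.fract_nonneg _)
    have h1 : rmod Δ z < 2 * Δ := by
      have hf := Int.fract_lt_one (z / (2 * Δ))
      have : (2 : ℝ) * Δ * Int.fract (z / (2 * Δ)) < 2 * Δ * 1 := by
        apply mul_lt_mul_of_pos_left hf; linarith
      simpa [rmod] using this
    have habs : |rmod Δ z - Δ| ≤ Δ := abs_le.2 ⟨by linarith, by linarith⟩
    exact ⟨by linarith [abs_nonneg (rmod Δ z - Δ)], by linarith⟩
  have hrmodid : ∀ z : ℝ, 0 ≤ z → z < 2 * Δ → rmod Δ z = z := by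
    intro z h0 h1
    have h2 : (0 : ℝ) < 2 * Δ := by linarith
    unfold rmod
    rw [Int.fract_eq_self.2 ⟨div_nonneg h0 h2.le, (div_lt_one h2).2 h1⟩]
    field_simp
  -- sets
  set A : Set Ω := {ω | t n ≤ Z ω} with hAdef
  set B : Set Ω := {ω | |Z ω - Δ| < ε} with hBdef
  have hA : MeasurableSet A := measurableSet_le measurable_const hZmeas
  have hB : MeasurableSet B :=
    measurableSet_lt (hZmeas.sub measurable_const).abs measurable_const
  have hBA : B ⊆ A := by
    intro ω hω
    have h := abs_lt.1 (show |Z ω - Δ| < ε from hω)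
    show t n ≤ Z ω
    linarith [h.1]
  -- Chebyshev
  have hmem2 : MemLp Z 2 ℙ :=
    (memLp_two_iff_integrable_sq hZmeas.aestronglyMeasurable).2 hZsq
  have hcheb : ℙ Bᶜ ≤ ENNReal.ofReal ε := by
    have h := meas_ge_le_variance_div_sq (μ := ℙ) hmem2 hεpos
    have hBc : Bᶜ = {ω | ε ≤ |Z ω - ∫ ω, Z ω|} := by
      ext ω; simp [hBdef, not_lt, hΔ]
    rw [hBc]
    calc ℙ {ω | ε ≤ |Z ω - ∫ ω, Z ω|} ≤ ENNReal.ofReal (variance Z ℙ / ε ^ 2) := h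
      _ = ENNReal.ofReal ε := by rw [← hv, hveq]
  have hBcR : (ℙ Bᶜ).toReal ≤ ε := ENNReal.toReal_le_of_le_ofReal hεpos.le hcheb
  have hArea : 1 - ε ≤ (ℙ A).toReal := by
    have hsum : ℙ B + ℙ Bᶜ = 1 := prob_add_prob_compl hB
    have hsumR : (ℙ B).toReal + (ℙ Bᶜ).toReal = 1 := by
      rw [← ENNReal.toReal_add (measure_ne_top _ _) (measure_ne_top _ _), hsum]
      simp
    have hmono : (ℙ B).toReal ≤ (ℙ A).toReal :=
      ENNReal.toReal_mono (measure_ne_top _ _) (measure_mono hBA)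
    linarith
  have hApos : 0 < (ℙ A).toReal := lt_of_lt_of_le (by linarith) hArea
  -- the integrand
  set g : Ω → ℝ := fun ω => f (y l + |rmod Δ (Z ω - t n) - Δ|) with hgdef
  have hgmeas : Measurable g := by
    apply hfmeas.comp
    apply measurable_const.add
    apply Measurable.abs
    apply Measurable.sub _ measurable_const
    exact measurable_const.mul (measurable_fract.comp
      ((hZmeas.sub measurable_const).mul measurable_const))
  have hgbound : ∀ ω, |g ω| ≤ G := fun ω => hG _ (hrmod _)
  have hgint : Integrable g := by
    refine (integrable_const G).mono' hgmeas.aestronglyMeasurable ?_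
    exact Filter.Eventually.of_forall fun ω => by
      simpa [Real.norm_eq_abs] using hgbound ω
  set c := f (y l + t n) with hcdef
  have hcG : |c| ≤ G := hG _ hmemc
  have hgc : Integrable (fun ω => g ω - c) := hgint.sub (integrable_const c)
  -- split the integral
  have hdisj : Disjoint (A ∩ B) (A ∩ Bᶜ) :=
    Disjoint.mono Set.inter_subset_right Set.inter_subset_right disjoint_compl_right
  have hIeq : ∫ ω in A, (g ω - c) =
      (∫ ω in A ∩ B, (g ω - c)) + ∫ ω in A ∩ Bᶜ, (g ω - c) := by
    rw [← setIntegral_union hdisj (hA.inter hB.compl) hgc.integrableOn hgc.integrableOn,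
      Set.inter_union_compl]
  -- bound on A ∩ B
  have h1 : ‖∫ ω in A ∩ B, (g ω - c)‖ ≤ (L * ε) * (ℙ (A ∩ B)).toReal := by
    apply norm_setIntegral_le_of_norm_le_const (measure_lt_top _ _)
    intro ω hω
    have htZ : t n ≤ Z ω := hω.1
    have habs := abs_lt.1 (show |Z ω - Δ| < ε from hω.2)
    have h0 : 0 ≤ Z ω - t n := by linarith
    have h2 : Z ω - t n < 2 * Δ := by linarith
    have hid : rmod Δ (Z ω - t n) = Z ω - t n := hrmodid _ h0 h2
    have hamem : y l + |Z ω - t n - Δ| ∈ Set.Icc (0 : ℝ) b := by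
      have := hrmod (Z ω - t n); rwa [hid] at this
    have hdist : |(y l + |Z ω - t n - Δ|) - (y l + t n)| ≤ ε := by
      have key := abs_abs_sub_abs_le_abs_sub (Z ω - t n - Δ) (-(t n))
      rw [abs_neg, abs_of_nonneg htn0] at key
      have : (Z ω - t n - Δ) - (-(t n)) = Z ω - Δ := by ring
      rw [this] at key
      have : (y l + |Z ω - t n - Δ|) - (y l + t n) = |Z ω - t n - Δ| - t n := by ring
      rw [this]
      have hZε : |Z ω - Δ| < ε := show |Z ω - Δ| < ε from hω.2
      linarith
    have hLb := hL _ hamem _ hmemc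
    calc ‖g ω - c‖ = |f (y l + |Z ω - t n - Δ|) - c| := by rw [hgdef]; simp [hid, Real.norm_eq_abs]
      _ ≤ L * |(y l + |Z ω - t n - Δ|) - (y l + t n)| := hLb
      _ ≤ L * ε := mul_le_mul_of_nonneg_left hdist hL0
  -- bound on A ∩ Bᶜ
  have h2 : ‖∫ ω in A ∩ Bᶜ, (g ω - c)‖ ≤ (2 * G) * (ℙ (A ∩ Bᶜ)).toReal := by
    apply norm_setIntegral_le_of_norm_le_const (measure_lt_top _ _)
    intro ω _
    have := hgbound ω
    rw [Real.norm_eq_abs]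
    calc |g ω - c| ≤ |g ω| + |c| := abs_sub _ _
      _ ≤ 2 * G := by linarith
  have hPAB : (ℙ (A ∩ B)).toReal ≤ 1 :=
    ENNReal.toReal_le_of_le_ofReal zero_le_one (by simpa using prob_le_one)
  have hPABc : (ℙ (A ∩ Bᶜ)).toReal ≤ ε :=
    le_trans (ENNReal.toReal_mono (measure_ne_top _ _)
      (measure_mono Set.inter_subset_right)) hBcR
  have hnum : |∫ ω in A, (g ω - c)| ≤ (2 * G + L) * ε := by
    rw [hIeq]
    have hLε : 0 ≤ L * ε := mul_nonneg hL0 hεpos.le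
    have hP1 : (0:ℝ) ≤ (ℙ (A ∩ B)).toReal := ENNReal.toReal_nonneg
    have hP2 : (0:ℝ) ≤ (ℙ (A ∩ Bᶜ)).toReal := ENNReal.toReal_nonneg
    calc |(∫ ω in A ∩ B, (g ω - c)) + ∫ ω in A ∩ Bᶜ, (g ω - c)|
        ≤ ‖∫ ω in A ∩ B, (g ω - c)‖ + ‖∫ ω in A ∩ Bᶜ, (g ω - c)‖ := abs_add_le _ _
      _ ≤ (L * ε) * (ℙ (A ∩ B)).toReal + (2 * G) * (ℙ (A ∩ Bᶜ)).toReal := by linarith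
      _ ≤ (2 * G + L) * ε := by
          have ha : (L * ε) * (ℙ (A ∩ B)).toReal ≤ (L * ε) * 1 :=
            mul_le_mul_of_nonneg_left hPAB hLε
          have hb' : (2 * G) * (ℙ (A ∩ Bᶜ)).toReal ≤ (2 * G) * ε :=
            mul_le_mul_of_nonneg_left hPABc (by linarith)
          linarith
  -- put it together
  rw [hfp l hl n hn x hx]
  have hkey : (∫ ω in A, f (y l + |rmod Δ (Z ω - t n) - Δ|)) / (ℙ A).toReal - c =
      (∫ ω in A, (g ω - c)) / (ℙ A).toReal := by
    rw [integral_sub hgint.integrableOn (integrable_const c).integrableOn,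
      setIntegral_const, smul_eq_mul]
    field_simp
    simp only [hgdef, measureReal_def]; ring
  rw [show (∫ ω in {ω | t n ≤ Z ω}, f (y l + |rmod Δ (Z ω - t n) - Δ|)) /
      (ℙ {ω | t n ≤ Z ω}).toReal - c =
      (∫ ω in A, (g ω - c)) / (ℙ A).toReal from hkey]
  rw [abs_div, abs_of_pos hApos]
  apply div_le_div₀ (by positivity) ?_ (by linarith) hArea
  exact hnum
end

section
/- (Appendix window estimate.) Let ε > 0 with v < ε², let t satisfy 2ε ≤ t ≤ Δ − ε, and let g : [0,Δ] → ℝ be bounded with |g| ≤ G and Lipschitz with constant L. Then ℙ(Z ≥ t) ≥ 1 − v/ε² > 0 and | 𝔼[ g(Z − t) · 1{0 ≤ Z − t ≤ Δ − ε} ] / ℙ(Z ≥ t) − g(Δ − t) | ≤ 2G (v/ε²)/(1 − v/ε²) + Lε. -/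
open MeasureTheory ProbabilityTheory

/-- appendix window estimate:
`|𝔼[g(Z-t)·1{0 ≤ Z-t ≤ Δ-ε}]/ℙ(Z ≥ t) - g(Δ-t)| ≤ 2G(v/ε²)/(1-v/ε²) + Lε`. -/
theorem window_estimate
    {Ω : Type*} [MeasureSpace Ω] [IsProbabilityMeasure (ℙ : Measure Ω)]
    (Z : Ω → ℝ) (hZmeas : Measurable Z)
    (hZnn : ∀ᵐ ω ∂ℙ, 0 ≤ Z ω)
    (hZint : Integrable Z) (hZsq : Integrable (fun ω => (Z ω) ^ 2))
    (Δ v : ℝ) (hΔ : Δ = ∫ ω, Z ω) (hΔpos : 0 < Δ)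
    (hv : v = variance Z ℙ) (hvpos : 0 < v)
    (ε t : ℝ) (hε : 0 < ε) (hvε : v < ε ^ 2) (ht1 : 2 * ε ≤ t) (ht2 : t ≤ Δ - ε)
    (g : ℝ → ℝ) (hgmeas : Measurable g)
    (G L : ℝ)
    (hG : ∀ x ∈ Set.Icc (0 : ℝ) Δ, |g x| ≤ G)
    (hL : ∀ x ∈ Set.Icc (0 : ℝ) Δ, ∀ x' ∈ Set.Icc (0 : ℝ) Δ, |g x - g x'| ≤ L * |x - x'|) :
    (1 - v / ε ^ 2 ≤ (ℙ {ω | t ≤ Z ω}).toReal ∧ 0 < (ℙ {ω | t ≤ Z ω}).toReal)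
    ∧ |(∫ ω in {ω | 0 ≤ Z ω - t ∧ Z ω - t ≤ Δ - ε}, g (Z ω - t))
          / (ℙ {ω | t ≤ Z ω}).toReal - g (Δ - t)|
        ≤ 2 * G * (v / ε ^ 2) / (1 - v / ε ^ 2) + L * ε := by
  have hε2 : (0:ℝ) < ε ^ 2 := by positivity
  set q : ℝ := v / ε ^ 2 with hqdef
  have hq0 : 0 < q := div_pos hvpos hε2
  have hq1 : q < 1 := (div_lt_one hε2).mpr hvε
  -- bounds on constants
  have hΔt : Δ - t ∈ Set.Icc (0 : ℝ) Δ := by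
    constructor <;> [linarith; linarith]
  have hG0 : 0 ≤ G := le_trans (abs_nonneg _) (hG _ hΔt)
  have hL0 : 0 ≤ L := by
    have h1 := hL 0 ⟨le_refl 0, hΔpos.le⟩ Δ ⟨hΔpos.le, le_refl Δ⟩
    have h2 : |(0:ℝ) - Δ| = Δ := by
      rw [abs_sub_comm, sub_zero, abs_of_pos hΔpos]
    rw [h2] at h1
    nlinarith [abs_nonneg (g 0 - g Δ)]
  -- Chebyshev
  have hmem : MemLp Z 2 ℙ := (memLp_two_iff_integrable_sq hZmeas.aestronglyMeasurable).mpr hZsq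
  have hcheb : ℙ {ω | ε ≤ |Z ω - Δ|} ≤ ENNReal.ofReal q := by
    have := meas_ge_le_variance_div_sq (μ := ℙ) hmem hε
    rw [← hΔ, ← hv] at this
    · exact this
  set Ebad : Set Ω := {ω | ε ≤ |Z ω - Δ|} with hEbad
  set S : Set Ω := {ω | t ≤ Z ω} with hS
  set A : Set Ω := {ω | 0 ≤ Z ω - t ∧ Z ω - t ≤ Δ - ε} with hA
  have hSmeas : MeasurableSet S := measurableSet_le measurable_const hZmeas
  have hEmeas : MeasurableSet Ebad :=
    measurableSet_le measurable_const ((hZmeas.sub_const Δ).abs)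
  have hAmeas : MeasurableSet A := by
    have : A = {ω | 0 ≤ Z ω - t} ∩ {ω | Z ω - t ≤ Δ - ε} := rfl
    rw [this]
    exact (measurableSet_le measurable_const ((hZmeas.sub_const t)))
      |>.inter (measurableSet_le (hZmeas.sub_const t) measurable_const)
  -- Sᶜ ⊆ Ebad
  have hScomp : Sᶜ ⊆ Ebad := by
    intro ω hω
    simp only [hS, Set.mem_compl_iff, Set.mem_setOf_eq, not_le] at hω
    simp only [hEbad, Set.mem_setOf_eq]
    rw [abs_sub_comm, abs_of_pos (by linarith)]
    linarith
  have hScq : (ℙ Sᶜ).toReal ≤ q := by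
    have h1 : ℙ Sᶜ ≤ ENNReal.ofReal q := le_trans (measure_mono hScomp) hcheb
    calc (ℙ Sᶜ).toReal ≤ (ENNReal.ofReal q).toReal :=
          ENNReal.toReal_mono ENNReal.ofReal_ne_top h1
      _ = q := ENNReal.toReal_ofReal hq0.le
  have hsum : (ℙ S).toReal + (ℙ Sᶜ).toReal = 1 := by
    rw [← ENNReal.toReal_add (measure_ne_top _ _) (measure_ne_top _ _),
      measure_add_measure_compl hSmeas]
    simp
  set p : ℝ := (ℙ S).toReal with hp
  have hp1 : 1 - q ≤ p := by linarith
  have hppos : 0 < p := by linarith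
  refine ⟨⟨hp1, hppos⟩, ?_⟩
  -- Main estimate
  set φ : Ω → ℝ := fun ω => Set.indicator A (fun ω => g (Z ω - t)) ω with hφ
  set f : Ω → ℝ := fun ω => φ ω - g (Δ - t) with hf
  have hAsub : A ⊆ S := by
    intro ω hω
    simp only [hA, Set.mem_setOf_eq] at hω
    simp only [hS, Set.mem_setOf_eq]
    linarith [hω.1]
  have hArange : ∀ ω ∈ A, Z ω - t ∈ Set.Icc (0:ℝ) Δ := by
    intro ω hω
    exact ⟨hω.1, by linarith [hω.2]⟩
  have hφbound : ∀ ω, |φ ω| ≤ G := by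
    intro ω
    by_cases hω : ω ∈ A
    · rw [hφ]; simp only [Set.indicator_of_mem hω]
      exact hG _ (hArange ω hω)
    · rw [hφ]; simp only [Set.indicator_of_notMem hω]
      simpa using hG0
  have hfbound : ∀ ω, |f ω| ≤ 2 * G := by
    intro ω
    calc |f ω| ≤ |φ ω| + |g (Δ - t)| := abs_sub _ _
      _ ≤ G + G := add_le_add (hφbound ω) (hG _ hΔt)
      _ = 2 * G := by ring
  have hφmeas : Measurable φ := (hgmeas.comp (hZmeas.sub_const t)).indicator hAmeas
  have hfmeas : Measurable f := hφmeas.sub_const _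
  have hfint : Integrable f := by
    refine Integrable.mono' (integrable_const (2 * G)) hfmeas.aestronglyMeasurable ?_
    filter_upwards with ω using by simpa [Real.norm_eq_abs] using hfbound ω
  have hφint : Integrable φ := by
    refine Integrable.mono' (integrable_const G) hφmeas.aestronglyMeasurable ?_
    filter_upwards with ω using by simpa [Real.norm_eq_abs] using hφbound ω
  -- the key integral identity
  have hIdent : ∫ ω in S, f ω = (∫ ω in A, g (Z ω - t)) - g (Δ - t) * p := by
    rw [hf]
    rw [integral_sub hφint.integrableOn
      (integrableOn_const (measure_lt_top _ _).ne)]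
    rw [hφ, setIntegral_indicator hAmeas, Set.inter_eq_right.mpr hAsub,
      setIntegral_const]
    simp [hp, smul_eq_mul, mul_comm, Measure.real]
  -- split S into good and bad parts
  have hSsplit : (S ∩ Ebadᶜ) ∪ (S ∩ Ebad) = S := by
    rw [← Set.inter_union_distrib_left, Set.compl_union_self, Set.inter_univ]
  have hdisj : Disjoint (S ∩ Ebadᶜ) (S ∩ Ebad) :=
    Set.disjoint_of_subset Set.inter_subset_right Set.inter_subset_right disjoint_compl_left
  have habs_int : Integrable (fun ω => |f ω|) := hfint.abs
  have hsplit : ∫ ω in S, |f ω| = (∫ ω in S ∩ Ebadᶜ, |f ω|) + ∫ ω in S ∩ Ebad, |f ω| := by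
    have h := setIntegral_union hdisj (hSmeas.inter hEmeas)
      habs_int.integrableOn habs_int.integrableOn
    rw [hSsplit] at h
    exact h
  -- bound on the good part
  have hgood : ∀ ω ∈ S ∩ Ebadᶜ, |f ω| ≤ L * ε := by
    intro ω hω
    obtain ⟨hωS, hωE⟩ := hω
    have hZω : |Z ω - Δ| < ε := by
      simpa [hEbad, not_le] using hωE
    have hωS' : t ≤ Z ω := hωS
    have hZω' := abs_lt.mp hZω
    have hωA : ω ∈ A := by
      refine ⟨by linarith, by linarith [hZω'.2]⟩
    have hf' : f ω = g (Z ω - t) - g (Δ - t) := by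
      simp [hf, hφ, Set.indicator_of_mem hωA]
    rw [hf']
    have hLip := hL (Z ω - t) (hArange ω hωA) (Δ - t) hΔt
    have heq : Z ω - t - (Δ - t) = Z ω - Δ := by ring
    rw [heq] at hLip
    calc |g (Z ω - t) - g (Δ - t)| ≤ L * |Z ω - Δ| := hLip
      _ ≤ L * ε := mul_le_mul_of_nonneg_left hZω.le hL0
  have h1 : ∫ ω in S ∩ Ebadᶜ, |f ω| ≤ L * ε * p := by
    calc ∫ ω in S ∩ Ebadᶜ, |f ω| ≤ ∫ _ω in S ∩ Ebadᶜ, L * ε := by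
          refine setIntegral_mono_on habs_int.integrableOn
            (integrableOn_const (measure_lt_top _ _).ne)
            (hSmeas.inter hEmeas.compl) hgood
      _ = (ℙ (S ∩ Ebadᶜ)).toReal * (L * ε) := by rw [setIntegral_const]; rfl
      _ ≤ p * (L * ε) := by
          refine mul_le_mul_of_nonneg_right ?_ (by positivity)
          exact ENNReal.toReal_mono (measure_ne_top _ _) (measure_mono Set.inter_subset_left)
      _ = L * ε * p := by ring
  have h2 : ∫ ω in S ∩ Ebad, |f ω| ≤ 2 * G * q := by
    calc ∫ ω in S ∩ Ebad, |f ω| ≤ ∫ _ω in S ∩ Ebad, 2 * G := by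
          refine setIntegral_mono_on habs_int.integrableOn
            (integrableOn_const (measure_lt_top _ _).ne)
            (hSmeas.inter hEmeas) (fun ω _ => hfbound ω)
      _ = (ℙ (S ∩ Ebad)).toReal * (2 * G) := by rw [setIntegral_const]; rfl
      _ ≤ q * (2 * G) := by
          refine mul_le_mul_of_nonneg_right ?_ (by positivity)
          calc (ℙ (S ∩ Ebad)).toReal
              ≤ (ENNReal.ofReal q).toReal := ENNReal.toReal_mono ENNReal.ofReal_ne_top
                (le_trans (measure_mono Set.inter_subset_right) hcheb)
            _ = q := ENNReal.toReal_ofReal hq0.le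
      _ = 2 * G * q := by ring
  have hkey : |(∫ ω in A, g (Z ω - t)) - g (Δ - t) * p| ≤ L * ε * p + 2 * G * q := by
    rw [← hIdent]
    calc |∫ ω in S, f ω| ≤ ∫ ω in S, |f ω| := by
          simpa [Real.norm_eq_abs] using norm_integral_le_integral_norm (μ := Measure.restrict ℙ S) f
      _ = (∫ ω in S ∩ Ebadᶜ, |f ω|) + ∫ ω in S ∩ Ebad, |f ω| := hsplit
      _ ≤ L * ε * p + 2 * G * q := add_le_add h1 h2
  -- final arithmetic
  have hrw : (∫ ω in A, g (Z ω - t)) / p - g (Δ - t)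
      = ((∫ ω in A, g (Z ω - t)) - g (Δ - t) * p) / p := by
    field_simp
  rw [hrw, abs_div, abs_of_pos hppos]
  have h1q : (0:ℝ) < 1 - q := by linarith
  calc |(∫ ω in A, g (Z ω - t)) - g (Δ - t) * p| / p ≤ (L * ε * p + 2 * G * q) / p := by
        gcongr
    _ = L * ε + 2 * G * q / p := by field_simp
    _ ≤ L * ε + 2 * G * q / (1 - q) := by gcongr
    _ = 2 * G * q / (1 - q) + L * ε := by ring
end

section
/- (Row-sum property of the matrix D.) Let ε ∈ (0, Δ) and suppose α e^{Sy} e > 0 for all y ∈ [0, Δ−ε]. Define D := ∫_0^{Δ−ε} e^{Sy} s · (α e^{Sy} / (α e^{Sy} e)) dy + (∫_{Δ−ε}^∞ e^{Sy} s dy) · (α e^{S(Δ−ε)} / (α e^{S(Δ−ε)} e)). Then D e = e. -/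
open MeasureTheory Matrix

attribute [local instance] Matrix.normedAddCommGroup Matrix.normedSpace

/-- The matrix `D = ∫₀^{Δ-ε} e^{Sy} s (α e^{Sy}/(α e^{Sy} e)) dy
  + (∫_{Δ-ε}^∞ e^{Sy} s dy)(α e^{S(Δ-ε)}/(α e^{S(Δ-ε)} e))`,
where `e` is the all-ones vector and `s = -S e`. -/
noncomputable def Dmat {p : ℕ} (S : Matrix (Fin p) (Fin p) ℝ) (α : Fin p → ℝ)
    (Δ ε : ℝ) : Matrix (Fin p) (Fin p) ℝ :=
  Matrix.of fun i j =>
    (∫ y in Set.Ioc (0 : ℝ) (Δ - ε),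
        (mexp S y *ᵥ -(S *ᵥ fun _ => (1 : ℝ))) i
          * ((α ᵥ* mexp S y) j / ((α ᵥ* mexp S y) ⬝ᵥ fun _ => (1 : ℝ))))
    + (∫ y in Set.Ioi (Δ - ε), (mexp S y *ᵥ -(S *ᵥ fun _ => (1 : ℝ))) i)
        * ((α ᵥ* mexp S (Δ - ε)) j / ((α ᵥ* mexp S (Δ - ε)) ⬝ᵥ fun _ => (1 : ℝ)))

lemma mexp_hasDerivAt_linfty {p : ℕ} (S : Matrix (Fin p) (Fin p) ℝ) (t : ℝ) :
    HasDerivAt (fun y : ℝ => mexp S y) (mexp S t * S) t := by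
  letI := Matrix.linftyOpNormedRing (α := ℝ) (n := Fin p)
  letI := Matrix.linftyOpNormedAlgebra (α := ℝ) (R := ℝ) (n := Fin p)
  haveI : @CompleteSpace (Matrix (Fin p) (Fin p) ℝ) (@PseudoMetricSpace.toUniformSpace _
      (@SeminormedRing.toPseudoMetricSpace _ (@NormedRing.toSeminormedRing _
        (Matrix.linftyOpNormedRing (α := ℝ) (n := Fin p))))) := FiniteDimensional.complete ℝ _
  exact hasDerivAt_exp_smul_const (𝕂 := ℝ) S t

lemma mexp_entry_hasDerivAt {p : ℕ} (S : Matrix (Fin p) (Fin p) ℝ) (t : ℝ) (i j : Fin p) :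
    HasDerivAt (fun y => mexp S y i j) ((mexp S t * S) i j) t := by
  have h := (hasDerivAt_iff_tendsto_slope (f := fun y : ℝ => mexp S y) (f' := mexp S t * S)
      (x := t)).mp
      (mexp_hasDerivAt_linfty S t)
  rw [hasDerivAt_iff_tendsto_slope]
  exact (Filter.Tendsto.comp ((continuous_apply j).tendsto _)
    ((Filter.Tendsto.comp ((continuous_apply i).tendsto _) h)))

lemma mexp_entry_continuous {p : ℕ} (S : Matrix (Fin p) (Fin p) ℝ) (i j : Fin p) :
    Continuous fun y => mexp S y i j :=
  continuous_iff_continuousAt.2 fun t => (mexp_entry_hasDerivAt S t i j).continuousAt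

lemma mexp_mulVec_hasDerivAt {p : ℕ} (S : Matrix (Fin p) (Fin p) ℝ) (v : Fin p → ℝ)
    (t : ℝ) (i : Fin p) :
    HasDerivAt (fun y => (mexp S y *ᵥ v) i) ((mexp S t *ᵥ (S *ᵥ v)) i) t := by
  have h := HasDerivAt.fun_sum (u := Finset.univ)
    (fun j _ => (mexp_entry_hasDerivAt S t i j).mul_const (v j))
  have h2 : (mexp S t *ᵥ (S *ᵥ v)) i = ∑ j, (mexp S t * S) i j * v j := by
    rw [Matrix.mulVec_mulVec]
    simp [Matrix.mulVec, dotProduct]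
  rw [h2]
  exact h.congr_of_eventuallyEq (Filter.Eventually.of_forall fun y => by
    simp [Matrix.mulVec, dotProduct])

lemma mexp_mulVec_continuous {p : ℕ} (S : Matrix (Fin p) (Fin p) ℝ) (v : Fin p → ℝ)
    (i : Fin p) : Continuous fun y => (mexp S y *ᵥ v) i := by
  have : (fun y => (mexp S y *ᵥ v) i) = fun y => ∑ j, mexp S y i j * v j := by
    ext y; simp [Matrix.mulVec, dotProduct]
  rw [this]
  exact continuous_finset_sum _ fun j _ => (mexp_entry_continuous S i j).mul continuous_const

lemma mexp_vecMul_continuous {p : ℕ} (S : Matrix (Fin p) (Fin p) ℝ) (α : Fin p → ℝ)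
    (j : Fin p) : Continuous fun y => (α ᵥ* mexp S y) j := by
  have : (fun y => (α ᵥ* mexp S y) j) = fun y => ∑ k, α k * mexp S y k j := by
    ext y; simp [Matrix.vecMul, dotProduct]
  rw [this]
  exact continuous_finset_sum _ fun k _ => continuous_const.mul (mexp_entry_continuous S k j)

lemma mexp_mulVec_integrableOn {p : ℕ} {S : Matrix (Fin p) (Fin p) ℝ}
    (hSint : IntegrableOn (fun x : ℝ => ‖mexp S x‖) (Set.Ici 0))
    (v : Fin p → ℝ) (i : Fin p) :
    IntegrableOn (fun y => (mexp S y *ᵥ v) i) (Set.Ioi (0:ℝ)) := by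
  refine Integrable.mono' ((hSint.mono_set Set.Ioi_subset_Ici_self).const_mul
      (∑ j, |v j|)) ((mexp_mulVec_continuous S v i).aestronglyMeasurable.restrict) ?_
  refine Filter.Eventually.of_forall fun y => ?_
  have : |(mexp S y *ᵥ v) i| ≤ ∑ j, |v j| * ‖mexp S y‖ := by
    calc |(mexp S y *ᵥ v) i| = |∑ j, mexp S y i j * v j| := by
          simp [Matrix.mulVec, dotProduct]
      _ ≤ ∑ j, |mexp S y i j * v j| := Finset.abs_sum_le_sum_abs _ _
      _ ≤ ∑ j, |v j| * ‖mexp S y‖ := by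
          refine Finset.sum_le_sum fun j _ => ?_
          rw [abs_mul, mul_comm]
          exact mul_le_mul_of_nonneg_left
            (Matrix.norm_entry_le_entrywise_sup_norm (mexp S y)) (abs_nonneg _)
  simpa [Finset.sum_mul, Real.norm_eq_abs] using this

lemma mexp_key_integral {p : ℕ} {S : Matrix (Fin p) (Fin p) ℝ}
    (hS0 : Filter.Tendsto (fun x : ℝ => mexp S x) Filter.atTop (nhds 0))
    (hSint : IntegrableOn (fun x : ℝ => ‖mexp S x‖) (Set.Ici 0))
    (v : Fin p → ℝ) (i : Fin p) :
    ∫ y in Set.Ioi (0:ℝ), (mexp S y *ᵥ (S *ᵥ v)) i = - v i := by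
  have hf0 : (mexp S 0 *ᵥ v) i = v i := by
    simp [mexp, NormedSpace.exp_zero]
  have htend : Filter.Tendsto (fun y => (mexp S y *ᵥ v) i) Filter.atTop (nhds 0) := by
    have hentry : ∀ j : Fin p, Filter.Tendsto (fun y => mexp S y i j) Filter.atTop
        (nhds 0) := by
      intro j
      have := (Filter.Tendsto.comp ((continuous_apply j).tendsto _)
        ((Filter.Tendsto.comp ((continuous_apply i).tendsto _) hS0)))
      exact this
    have : Filter.Tendsto (fun y => ∑ j, mexp S y i j * v j) Filter.atTop (nhds 0) := by
      have := tendsto_finset_sum Finset.univ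
        (fun j (_ : j ∈ Finset.univ) => (hentry j).mul_const (v j))
      simpa using this
    refine this.congr fun y => ?_
    simp [Matrix.mulVec, dotProduct]
  have := integral_Ioi_of_hasDerivAt_of_tendsto
    (f := fun y => (mexp S y *ᵥ v) i) (f' := fun y => (mexp S y *ᵥ (S *ᵥ v)) i)
    (a := 0) (m := 0)
    (mexp_mulVec_continuous S v i).continuousWithinAt
    (fun x _ => mexp_mulVec_hasDerivAt S v x i)
    (mexp_mulVec_integrableOn hSint _ i) htend
  rw [this]
  show (0:ℝ) - (mexp S 0 *ᵥ v) i = - v i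
  rw [hf0, zero_sub]

/-- row-sum property of `D`: `D e = e`. -/
theorem Dmat_row_sums
    (p : ℕ) (hp : 1 ≤ p) (S : Matrix (Fin p) (Fin p) ℝ)
    (hS0 : Filter.Tendsto (fun x : ℝ => mexp S x) Filter.atTop (nhds 0))
    (hSint : IntegrableOn (fun x : ℝ => ‖mexp S x‖) (Set.Ici 0))
    (α : Fin p → ℝ) (Δ ε : ℝ) (hΔ : 0 < Δ) (hε : ε ∈ Set.Ioo 0 Δ)
    (hpos : ∀ y ∈ Set.Icc (0 : ℝ) (Δ - ε), 0 < (α ᵥ* mexp S y) ⬝ᵥ (fun _ => (1 : ℝ))) :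
    Dmat S α Δ ε *ᵥ (fun _ => (1 : ℝ)) = fun _ => (1 : ℝ) := by
  have hT : 0 < Δ - ε := sub_pos.2 hε.2
  set e1 : Fin p → ℝ := fun _ => (1 : ℝ) with he1
  set v : Fin p → ℝ := -(S *ᵥ e1) with hv
  funext i
  set A : ℝ → ℝ := fun y => (mexp S y *ᵥ v) i with hA
  set d : ℝ → ℝ := fun y => (α ᵥ* mexp S y) ⬝ᵥ e1 with hd
  -- integrability of A
  have hAint : IntegrableOn A (Set.Ioi (0:ℝ)) := mexp_mulVec_integrableOn hSint v i
  have hAIoc : IntegrableOn A (Set.Ioc (0:ℝ) (Δ - ε)) :=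
    hAint.mono_set Set.Ioc_subset_Ioi_self
  have hAIoi : IntegrableOn A (Set.Ioi (Δ - ε)) :=
    hAint.mono_set (Set.Ioi_subset_Ioi hT.le)
  -- the total improper integral of A is 1
  have hA1 : ∫ y in Set.Ioi (0:ℝ), A y = 1 := by
    have h := mexp_key_integral hS0 hSint e1 i
    have hfun : A = fun y => -((mexp S y *ᵥ (S *ᵥ e1)) i) := by
      funext y; simp [hA, hv, Matrix.mulVec_neg]
    rw [hfun, integral_neg, h]
    simp [he1]
  -- continuity of d
  have hdcont : Continuous d := by
    have : d = fun y => ∑ j, (α ᵥ* mexp S y) j * e1 j := by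
      funext y; simp [hd, dotProduct]
    rw [this]
    exact continuous_finset_sum _ fun j _ =>
      (mexp_vecMul_continuous S α j).mul continuous_const
  have hAcont : Continuous A := mexp_mulVec_continuous S v i
  -- integrability of each summand on the Ioc part
  have hint : ∀ j : Fin p, IntegrableOn
      (fun y => A y * ((α ᵥ* mexp S y) j / d y)) (Set.Ioc (0:ℝ) (Δ - ε)) := by
    intro j
    have hcont : ContinuousOn (fun y => A y * ((α ᵥ* mexp S y) j / d y))
        (Set.Icc (0:ℝ) (Δ - ε)) := by
      refine (hAcont.continuousOn).mul
        (((mexp_vecMul_continuous S α j).continuousOn).div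
          hdcont.continuousOn fun y hy => (hpos y hy).ne')
    exact hcont.integrableOn_Icc.mono_set Set.Ioc_subset_Icc_self
  -- now compute the row sum
  show (Dmat S α Δ ε *ᵥ e1) i = 1
  have hrow : (Dmat S α Δ ε *ᵥ e1) i = ∑ j, Dmat S α Δ ε i j := by
    simp [Matrix.mulVec, dotProduct, he1]
  rw [hrow]
  have hDij : ∀ j, Dmat S α Δ ε i j =
      (∫ y in Set.Ioc (0 : ℝ) (Δ - ε), A y * ((α ᵥ* mexp S y) j / d y))
      + (∫ y in Set.Ioi (Δ - ε), A y) * ((α ᵥ* mexp S (Δ - ε)) j / d (Δ - ε)) := by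
    intro j; simp [Dmat, hA, hv, hd, he1]
  rw [Finset.sum_congr rfl fun j _ => hDij j]
  rw [Finset.sum_add_distrib, ← Finset.mul_sum]
  -- second sum is 1
  have hdT : 0 < d (Δ - ε) := hpos _ ⟨hT.le, le_refl _⟩
  have hsum2 : ∑ j, (α ᵥ* mexp S (Δ - ε)) j / d (Δ - ε) = 1 := by
    rw [← Finset.sum_div]
    have : ∑ j, (α ᵥ* mexp S (Δ - ε)) j = d (Δ - ε) := by
      simp [hd, dotProduct, he1]
    rw [this, div_self hdT.ne']
  rw [hsum2, mul_one]
  -- first sum: swap sum and integral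
  have hswap : ∑ j, (∫ y in Set.Ioc (0 : ℝ) (Δ - ε), A y * ((α ᵥ* mexp S y) j / d y))
      = ∫ y in Set.Ioc (0 : ℝ) (Δ - ε), ∑ j, A y * ((α ᵥ* mexp S y) j / d y) := by
    exact (integral_finset_sum Finset.univ fun j _ => hint j).symm
  rw [hswap]
  have hcongr : ∫ y in Set.Ioc (0 : ℝ) (Δ - ε), ∑ j, A y * ((α ᵥ* mexp S y) j / d y)
      = ∫ y in Set.Ioc (0 : ℝ) (Δ - ε), A y := by
    refine setIntegral_congr_fun measurableSet_Ioc fun y hy => ?_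
    have hy' : y ∈ Set.Icc (0:ℝ) (Δ - ε) := ⟨hy.1.le, hy.2⟩
    rw [← Finset.mul_sum, ← Finset.sum_div]
    have : ∑ j, (α ᵥ* mexp S y) j = d y := by
      simp [hd, dotProduct, he1]
    rw [this, div_self (hpos y hy').ne', mul_one]
  rw [hcongr]
  have hunion : (∫ y in Set.Ioc (0:ℝ) (Δ - ε), A y) + ∫ y in Set.Ioi (Δ - ε), A y
      = ∫ y in Set.Ioi (0:ℝ), A y := by
    rw [← setIntegral_union (Set.Ioc_disjoint_Ioi le_rfl) measurableSet_Ioi hAIoc hAIoi,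
      Set.Ioc_union_Ioi_eq_Ioi hT.le]
  rw [hunion, hA1]
end
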